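/- Let B be a classical crystal with an energy function H, and let B^aff be its affinization with affine energy function H^aff(a(m) ⊗ b(n)) = H(a ⊗ b) + m − n. Then H^aff is constant on each connected component of the crystal B^aff ⊗ B^aff. -/

import Mathlib

/-!
Statement 17: Let `B` be a classical crystal with an energy function `H`, and let
`B^aff` be its affinization with affine energy function
`H^aff(a(m) ⊗ b(n)) = H(a ⊗ b) + m - n`.  Then `H^aff` is constant on each connected
component of the crystal `B^aff ⊗ B^aff`.
-/

namespace Stmt17

/-- A classical crystal for an affine Cartan datum with index set `I`, weight lattice
`P̄ = P`, pairing `⟨hᵢ, ·⟩` and simple roots `αᵢ`, satisfying Kashiwara's crystal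
axioms.  `εᵢ, φᵢ` take values in `ℤ ∪ {-∞} = WithBot ℤ`. -/
structure CCrystal (I : Type*) (P : Type*) [AddCommGroup P] where
  /-- the underlying set of the crystal -/
  B : Type*
  wt : B → P
  eK : I → B → Option B
  fK : I → B → Option B
  ε : I → B → WithBot ℤ
  φ : I → B → WithBot ℤ
  /-- the pairing `⟨hᵢ, ·⟩` with the simple coroots -/
  pairing : I → P → ℤ
  /-- the simple roots `αᵢ` -/
  alpha : I → P
  ax_phi_eps : ∀ i b, φ i b = ε i b + ((pairing i (wt b) : ℤ) : WithBot ℤ)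
  ax_wt_e : ∀ i b b', eK i b = some b' → wt b' = wt b + alpha i
  ax_wt_f : ∀ i b b', fK i b = some b' → wt b' = wt b - alpha i
  ax_eps_e : ∀ i b b', eK i b = some b' → ε i b' + 1 = ε i b ∧ φ i b' = φ i b + 1
  ax_eps_f : ∀ i b b', fK i b = some b' → ε i b' = ε i b + 1 ∧ φ i b' + 1 = φ i b
  ax_ef : ∀ i b b', fK i b = some b' ↔ eK i b' = some b
  ax_bot : ∀ i b, φ i b = ⊥ → eK i b = none ∧ fK i b = none

variable {I : Type*} {P : Type*} [AddCommGroup P] [DecidableEq I]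

/-- The Kashiwara operator `f̃ᵢ` on the tensor product `B ⊗ B`:
`f̃ᵢ(b₁ ⊗ b₂) = f̃ᵢ b₁ ⊗ b₂` if `φᵢ(b₁) > εᵢ(b₂)`, else `b₁ ⊗ f̃ᵢ b₂`. -/
noncomputable def tensF (C : CCrystal I P) (i : I) (p : C.B × C.B) : Option (C.B × C.B) :=
  if C.ε i p.2 < C.φ i p.1 then (C.fK i p.1).map fun b => (b, p.2)
  else (C.fK i p.2).map fun b => (p.1, b)

/-- `H` is an energy function on `B ⊗ B` (with distinguished affine index `i0 = 0`):
whenever `f̃ᵢ(b₁ ⊗ b₂)` lies in `B ⊗ B`, `H` is unchanged for `i ≠ 0`, decreases by 1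
for `i = 0` with `φ₀(b₁) > ε₀(b₂)`, and increases by 1 for `i = 0` with
`φ₀(b₁) ≤ ε₀(b₂)`. -/
def IsEnergy (C : CCrystal I P) (i0 : I) (H : C.B → C.B → ℤ) : Prop :=
  ∀ (i : I) (p q : C.B × C.B), tensF C i p = some q →
    H q.1 q.2 = H p.1 p.2 +
      (if i = i0 then (if C.ε i p.2 < C.φ i p.1 then (-1 : ℤ) else 1) else 0)

/-- The Kashiwara operator `f̃ᵢ` on the affinization `B^aff`:
`f̃ᵢ(b(n)) = (f̃ᵢ b)(n + δ_{i,0})`. -/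
def affF (C : CCrystal I P) (i0 i : I) (x : C.B × ℤ) : Option (C.B × ℤ) :=
  (C.fK i x.1).map fun b => (b, x.2 + (if i = i0 then 1 else 0))

/-- The Kashiwara operator `ẽᵢ` on the affinization `B^aff`:
`ẽᵢ(b(n)) = (ẽᵢ b)(n - δ_{i,0})`. -/
def affE (C : CCrystal I P) (i0 i : I) (x : C.B × ℤ) : Option (C.B × ℤ) :=
  (C.eK i x.1).map fun b => (b, x.2 - (if i = i0 then 1 else 0))

/-- The Kashiwara operator `f̃ᵢ` on `B^aff ⊗ B^aff` (tensor product rule; note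
`εᵢ(b(n)) = εᵢ(b)` and `φᵢ(b(n)) = φᵢ(b)`). -/
noncomputable def tensAffF (C : CCrystal I P) (i0 i : I) (p : (C.B × ℤ) × (C.B × ℤ)) :
    Option ((C.B × ℤ) × (C.B × ℤ)) :=
  if C.ε i p.2.1 < C.φ i p.1.1 then (affF C i0 i p.1).map fun x => (x, p.2)
  else (affF C i0 i p.2).map fun x => (p.1, x)

/-- The Kashiwara operator `ẽᵢ` on `B^aff ⊗ B^aff` (tensor product rule). -/
noncomputable def tensAffE (C : CCrystal I P) (i0 i : I) (p : (C.B × ℤ) × (C.B × ℤ)) :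
    Option ((C.B × ℤ) × (C.B × ℤ)) :=
  if C.ε i p.2.1 ≤ C.φ i p.1.1 then (affE C i0 i p.1).map fun x => (x, p.2)
  else (affE C i0 i p.2).map fun x => (p.1, x)

/-- One application of a Kashiwara operator `ẽᵢ` or `f̃ᵢ` on `B^aff ⊗ B^aff`;
connected components are taken with respect to this relation. -/
def tensRel (C : CCrystal I P) (i0 : I) (p q : (C.B × ℤ) × (C.B × ℤ)) : Prop :=
  ∃ i, tensAffF C i0 i p = some q ∨ tensAffE C i0 i p = some q

/-- The affine energy function `H^aff(a(m) ⊗ b(n)) = H(a ⊗ b) + m - n`. -/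
def Haff (C : CCrystal I P) (H : C.B → C.B → ℤ) (p : (C.B × ℤ) × (C.B × ℤ)) : ℤ :=
  H p.1.1 p.2.1 + p.1.2 - p.2.2

private lemma wb_le_of_lt_add_one {a b : WithBot ℤ} (h : a < b + 1) : a ≤ b := by
  cases a with
  | bot => exact bot_le
  | coe a =>
    cases b with
    | bot => simp at h
    | coe b =>
      have : a < b + 1 := by exact_mod_cast h
      exact_mod_cast Int.lt_add_one_iff.mp this

private lemma wb_lt_add_one_of_le {a b : WithBot ℤ} (h : a ≤ b) (hb : b ≠ ⊥) :
    a < b + 1 := by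
  obtain ⟨c, rfl⟩ := WithBot.ne_bot_iff_exists.mp hb
  refine lt_of_le_of_lt h ?_
  exact_mod_cast lt_add_one c

lemma haff_F (C : CCrystal I P) (i0 : I) (H : C.B → C.B → ℤ) (hH : IsEnergy C i0 H)
    {i : I} {p q : (C.B × ℤ) × (C.B × ℤ)} (h : tensAffF C i0 i p = some q) :
    Haff C H p = Haff C H q := by
  unfold tensAffF affF at h
  split at h
  case isTrue hc =>
    rcases hf : C.fK i p.1.1 with _ | b <;> rw [hf] at h <;> simp at h
    subst h
    have ht : tensF C i (p.1.1, p.2.1) = some (b, p.2.1) := by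
      unfold tensF; simp [hc, hf]
    have := hH i _ _ ht
    simp only [Haff, this, hc, if_true]
    split_ifs <;> ring
  case isFalse hc =>
    rcases hf : C.fK i p.2.1 with _ | b <;> rw [hf] at h <;> simp at h
    subst h
    have ht : tensF C i (p.1.1, p.2.1) = some (p.1.1, b) := by
      unfold tensF; simp [hc, hf]
    have := hH i _ _ ht
    simp only [Haff, this, hc, if_false]
    split_ifs <;> ring

lemma E_to_F (C : CCrystal I P) (i0 : I)
    {i : I} {p q : (C.B × ℤ) × (C.B × ℤ)} (h : tensAffE C i0 i p = some q) :
    tensAffF C i0 i q = some p := by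
  unfold tensAffE affE at h
  split at h
  case isTrue hc =>
    rcases he : C.eK i p.1.1 with _ | b <;> rw [he] at h <;> simp at h
    subst h
    have hf : C.fK i b = some p.1.1 := (C.ax_ef i b p.1.1).mpr he
    have hphi : C.φ i b = C.φ i p.1.1 + 1 := (C.ax_eps_e i p.1.1 b he).2
    have hbot : C.φ i p.1.1 ≠ ⊥ := by
      intro hb
      have := (C.ax_bot i p.1.1 hb).1
      rw [this] at he; cases he
    have hcond : C.ε i p.2.1 < C.φ i b := by
      rw [hphi]; exact wb_lt_add_one_of_le hc hbot
    unfold tensAffF affF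
    simp [hcond, hf]
  case isFalse hc =>
    rcases he : C.eK i p.2.1 with _ | b <;> rw [he] at h <;> simp at h
    subst h
    have hf : C.fK i b = some p.2.1 := (C.ax_ef i b p.2.1).mpr he
    have heps : C.ε i b + 1 = C.ε i p.2.1 := (C.ax_eps_e i p.2.1 b he).1
    have hlt : C.φ i p.1.1 < C.ε i b + 1 := by
      rw [heps]; exact lt_of_not_ge hc
    have hcond : ¬ C.ε i b < C.φ i p.1.1 := not_lt_of_ge (wb_le_of_lt_add_one hlt)
    unfold tensAffF affF
    simp [hcond, hf]

/-- The affine energy function `H^aff` is constant on each connected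
component of `B^aff ⊗ B^aff`. -/
theorem affine_energy_constant_on_components (C : CCrystal I P) (i0 : I)
    (H : C.B → C.B → ℤ) (hH : IsEnergy C i0 H)
    (p q : (C.B × ℤ) × (C.B × ℤ)) (h : Relation.EqvGen (tensRel C i0) p q) :
    Haff C H p = Haff C H q := by
  induction h with
  | rel a b hab =>
    obtain ⟨i, hF | hE⟩ := hab
    · exact haff_F C i0 H hH hF
    · exact (haff_F C i0 H hH (E_to_F C i0 hE)).symm
  | refl a => rfl
  | symm a b _ ih => exact ih.symm
  | trans a b c _ _ ih1 ih2 => exact ih1.trans ih2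

end Stmt17
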